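/- Let (G,T) be a graft, let F be a minimum join, let X ⊆ V(G) be an extreme set, and let Y, Z ⊆ V(G) be disjoint sets with Y ∪ Z = V(G)∖X, such that no edge of G joins Y and Z, and F contains no edge with both ends in Z and no edge of δ_G(Z). Let (Ĝ, T̂) be a graft with V(Ĝ) ⊇ V(G), E(Ĝ) ⊇ E(G), T̂ = T, such that every edge of E(Ĝ)∖E(G) joins a vertex of X to a vertex of V(Ĝ)∖V(G). Let Ẑ = Z ∪ (V(Ĝ)∖V(G)). If Q is a subgraph of Ĝ with V(Q) ∩ Ẑ ≠ ∅ and Q is either a circuit or a path between a vertex of X and a vertex of X ∪ Ẑ, then w_F(Q) > 0. -/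

import Mathlib

open scoped Classical

variable {V : Type*}

/-- The `F`-weight of a walk: number of edges outside `F` minus number of edges in `F`. -/
noncomputable def walkWeight {G : SimpleGraph V} (F : Set (Sym2 V)) {x y : V}
    (p : G.Walk x y) : ℤ :=
  ((p.edges.filter fun e => e ∉ F).length : ℤ) -
    ((p.edges.filter fun e => e ∈ F).length : ℤ)

/-- The `F`-distance between `x` and `y`: the minimum `F`-weight of a path between them. -/
noncomputable def distF (G : SimpleGraph V) (F : Set (Sym2 V)) (x y : V) : ℤ :=
  sInf {w : ℤ | ∃ p : G.Walk x y, p.IsPath ∧ walkWeight F p = w}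

/-- `F` is a join of the graft `(G, T)`. -/
def IsJoin (G : SimpleGraph V) (T : Set V) (F : Set (Sym2 V)) : Prop :=
  F ⊆ G.edgeSet ∧ ∀ v : V, v ∈ T ↔ Odd {e ∈ F | v ∈ e}.ncard

/-- `F` is a minimum join of the graft `(G, T)`. -/
def IsMinJoin (G : SimpleGraph V) (T : Set V) (F : Set (Sym2 V)) : Prop :=
  IsJoin G T F ∧ ∀ F' : Set (Sym2 V), IsJoin G T F' → F.ncard ≤ F'.ncard

/-- `(G, T)` is a graft: every connected component contains an even number of vertices of `T`. -/
def IsGraft (G : SimpleGraph V) (T : Set V) : Prop :=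
  ∀ v : V, Even {u | u ∈ T ∧ G.Reachable v u}.ncard

/-- `X` is an extreme set: `d_F(x, y) ≥ 0` for all `x, y ∈ X`. -/
def IsExtremeSet (G : SimpleGraph V) (F : Set (Sym2 V)) (X : Set V) : Prop :=
  ∀ x ∈ X, ∀ y ∈ X, 0 ≤ distF G F x y

/-- `G` is bipartite with vertex set `Vset` and color classes `A`, `B`. -/
def IsBipartitionOn (G : SimpleGraph V) (Vset A B : Set V) : Prop :=
  A ∪ B = Vset ∧ Disjoint A B ∧
    ∀ v w : V, G.Adj v w → (v ∈ A ∧ w ∈ B) ∨ (v ∈ B ∧ w ∈ A)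

/-- `X` is a maximal bipartitic extreme set with respect to color classes `A`, `B`. -/
def MaxBipExtreme (G : SimpleGraph V) (F : Set (Sym2 V)) (A B X : Set V) : Prop :=
  IsExtremeSet G F X ∧ (X ⊆ A ∨ X ⊆ B) ∧
    ∀ X' : Set V, IsExtremeSet G F X' → (X' ⊆ A ∨ X' ⊆ B) → X ⊆ X' → X' = X

/-- `D_X`: the vertices of `Vset ∖ X` at negative `F`-distance from `X`. -/
def Dset (G : SimpleGraph V) (F : Set (Sym2 V)) (Vset X : Set V) : Set V :=
  {y | y ∈ Vset ∧ y ∉ X ∧ ∃ x ∈ X, distF G F x y < 0}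

/-- `C_X = Vset ∖ X ∖ D_X`. -/
def Cset (G : SimpleGraph V) (F : Set (Sym2 V)) (Vset X : Set V) : Set V :=
  (Vset \ X) \ Dset G F Vset X

/-- `min_{x ∈ X} d_F(x, y)`. -/
noncomputable def minDistX (G : SimpleGraph V) (F : Set (Sym2 V)) (X : Set V) (y : V) : ℤ :=
  sInf {d : ℤ | ∃ x ∈ X, distF G F x y = d}

/-- The graph `G − S` obtained by deleting the vertices of `S`. -/
def gDelete (G : SimpleGraph V) (S : Set V) : SimpleGraph V where
  Adj v w := G.Adj v w ∧ v ∉ S ∧ w ∉ S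
  symm := ⟨fun v w ⟨h, hv, hw⟩ => ⟨h.symm, hw, hv⟩⟩
  loopless := ⟨fun v h => G.loopless.irrefl v h.1⟩

/-- The subgraph of `G` induced by `S`. -/
def gRestrict (G : SimpleGraph V) (S : Set V) : SimpleGraph V where
  Adj v w := G.Adj v w ∧ v ∈ S ∧ w ∈ S
  symm := ⟨fun v w ⟨h, hv, hw⟩ => ⟨h.symm, hw, hv⟩⟩
  loopless := ⟨fun v h => G.loopless.irrefl v h.1⟩

/-- `C` is (the vertex set of) a connected component of `G − X`. -/
def IsCompOf (G : SimpleGraph V) (X C : Set V) : Prop :=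
  ∃ v, v ∉ X ∧ C = {u | (gDelete G X).Reachable v u}

/-- `δ_G(C)`: the edges of `G` with exactly one end in `C`. -/
def edgeBoundary (G : SimpleGraph V) (C : Set V) : Set (Sym2 V) :=
  {e | e ∈ G.edgeSet ∧ ∃ u v : V, e = s(u, v) ∧ u ∈ C ∧ v ∉ C}

/-- `X` is an `F`-combic set of the graft `(G, T)`. -/
def IsCombic (G : SimpleGraph V) (T : Set V) (F : Set (Sym2 V)) (X : Set V) : Prop :=
  (∀ u v : V, s(u, v) ∈ F → ¬(u ∈ X ∧ v ∈ X)) ∧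
  (∀ C : Set V, IsCompOf G X C → Odd (C ∩ T).ncard →
      (edgeBoundary G C ∩ F).ncard = 1) ∧
  (∀ C : Set V, IsCompOf G X C → Even (C ∩ T).ncard →
      edgeBoundary G C ∩ F = ∅)

/-- The rootlization of `G` by the mount `X`, root `r` and attachment `s`. -/
def rootlize (G : SimpleGraph V) (X : Set V) (r s : V) : SimpleGraph V :=
  SimpleGraph.fromRel fun v w => G.Adj v w ∨ (v = r ∧ w = s) ∨ (v = s ∧ w ∈ X)

/-- The initial component of `r`: the connected component of `r` in the subgraph
induced by the vertices at nonpositive `F`-distance from `r`. -/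
def initComp (G : SimpleGraph V) (F : Set (Sym2 V)) (r : V) : Set V :=
  {x | (gRestrict G {y | distF G F r y ≤ 0}).Reachable r x}

open SimpleGraph

section Helpers
variable {G : SimpleGraph V} {F : Set (Sym2 V)}

lemma walkWeight_edges_nil {x y : V} {p : G.Walk x y} (h : p.edges = []) :
    walkWeight F p = 0 := by simp [walkWeight, h]

lemma walkWeight_cons {a b u : V} (h : G.Adj a b) (p : G.Walk b u) :
    walkWeight F (Walk.cons h p)
      = (if s(a,b) ∈ F then (-1:ℤ) else 1) + walkWeight F p := by
  by_cases hm : s(a,b) ∈ F <;>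
    simp [walkWeight, Walk.edges_cons, List.filter_cons, hm] <;> ring

lemma walkWeight_append {a b c : V} (p : G.Walk a b) (q : G.Walk b c) :
    walkWeight F (p.append q) = walkWeight F p + walkWeight F q := by
  simp only [walkWeight, Walk.edges_append, List.filter_append, List.length_append]
  push_cast; ring

lemma walkWeight_reverse {a b : V} (p : G.Walk a b) :
    walkWeight F p.reverse = walkWeight F p := by
  simp [walkWeight, Walk.edges_reverse, List.filter_reverse]

lemma walkWeight_ge {a b : V} (p : G.Walk a b) : -(p.length : ℤ) ≤ walkWeight F p := by
  have h1 : (p.edges.filter fun e => e ∈ F).length ≤ p.edges.length :=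
    List.length_filter_le _ _
  have h2 : p.edges.length = p.length := p.length_edges
  unfold walkWeight
  omega

lemma walkWeight_rotate {v u : V} (c : G.Walk v v) (h : u ∈ c.support) :
    walkWeight F (c.rotate u h) = walkWeight F c := by
  have hp : (c.rotate u h).edges.Perm c.edges := (c.rotate_edges u h).perm
  simp only [walkWeight, (hp.filter _).length_eq]

lemma distF_le_walkWeight [Fintype V] {a u : V} {p : G.Walk a u} (hp : p.IsPath) :
    distF G F a u ≤ walkWeight F p := by
  apply csInf_le
  · refine ⟨-(Fintype.card V : ℤ), ?_⟩
    rintro w ⟨q, hq, rfl⟩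
    have h1 := walkWeight_ge (F := F) q
    have h2 : q.length < Fintype.card V := hq.length_lt
    omega
  · exact ⟨p, hp, rfl⟩

end Helpers

/-- with `X` extreme, `Y ∪ Z = V(G) ∖ X`, no edge between `Y` and `Z`,
no edge of `F` touching `Z`, and `Ĝ` obtained by adding new vertices joined only to `X`:
every circuit of `Ĝ`, and every path of `Ĝ` between a vertex of `X` and a vertex of
`X ∪ Ẑ`, that meets `Ẑ = Z ∪ (V(Ĝ) ∖ V(G))` has positive `F`-weight. -/

theorem stmt_5 [Fintype V] (G Ghat : SimpleGraph V) (Vg T Y Z X : Set V)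
    (F : Set (Sym2 V))
    (hGV : ∀ v w : V, G.Adj v w → v ∈ Vg ∧ w ∈ Vg)
    (hT : T ⊆ Vg) (hGT : IsGraft G T) (hF : IsMinJoin G T F)
    (hXV : X ⊆ Vg) (hext : IsExtremeSet G F X)
    (hYZdisj : Disjoint Y Z) (hYZ : Y ∪ Z = Vg \ X)
    (hnoedge : ∀ y ∈ Y, ∀ z ∈ Z, ¬ G.Adj y z)
    (hFZ : ∀ e ∈ F, ∀ v ∈ Z, v ∉ e)
    (hsub : G ≤ Ghat)
    (hnew : ∀ v w : V, Ghat.Adj v w → ¬ G.Adj v w →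
      (v ∈ X ∧ w ∉ Vg) ∨ (w ∈ X ∧ v ∉ Vg))
    (hGhat : IsGraft Ghat T) :
    (∀ (v : V) (Q : Ghat.Walk v v), Q.IsCycle →
      (∃ u ∈ Q.support, u ∈ Z ∪ Vgᶜ) → 0 < walkWeight F Q) ∧
    (∀ (x u : V) (Q : Ghat.Walk x u), Q.IsPath → x ∈ X → u ∈ X ∪ (Z ∪ Vgᶜ) →
      (∃ t ∈ Q.support, t ∈ Z ∪ Vgᶜ) → 0 < walkWeight F Q) := by
  -- basic facts
  have hZVg : Z ⊆ Vg \ X := fun z hz => hYZ ▸ Set.mem_union_right Y hz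
  have hXZh : ∀ x ∈ X, x ∉ Z ∪ Vgᶜ := by
    intro x hx hmem
    rcases hmem with hZ | hV
    · exact (hZVg hZ).2 hx
    · exact hV (hXV hx)
  have hedgeF : ∀ a b : V, a ∈ Z ∪ Vgᶜ → s(a,b) ∉ F := by
    intro a b haZ hmem
    have hadj : G.Adj a b := hF.1.1 hmem
    rcases haZ with hZ | hV
    · exact hFZ _ hmem a hZ (Sym2.mem_mk_left a b)
    · exact hV (hGV a b hadj).1
  have hedgeF' : ∀ a b : V, b ∈ Z ∪ Vgᶜ → s(a,b) ∉ F := by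
    intro a b hbZ hmem
    rw [Sym2.eq_swap] at hmem
    exact hedgeF b a hbZ hmem
  have hGedge : ∀ a b : V, Ghat.Adj a b → a ∈ Vg → b ∈ Vg → G.Adj a b := by
    intro a b hadj haV hbV
    by_contra hG
    rcases hnew a b hadj hG with ⟨_, hb⟩ | ⟨_, ha⟩
    · exact hb hbV
    · exact ha haV
  have hnbr : ∀ a b : V, Ghat.Adj a b → a ∈ Z ∪ Vgᶜ → b ∈ X ∪ (Z ∪ Vgᶜ) := by
    intro a b hadj haZ
    by_cases hG : G.Adj a b
    · have hbV := (hGV a b hG).2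
      rcases haZ with hZ | hV
      · -- a ∈ Z; b ∈ Vg. b ∈ X or b ∈ Y ∪ Z
        by_cases hbX : b ∈ X
        · exact Or.inl hbX
        · have hb : b ∈ Y ∪ Z := hYZ ▸ (Set.mem_diff b).mpr ⟨hbV, hbX⟩
          rcases hb with hY | hZ'
          · exact absurd hG.symm (hnoedge b hY a hZ)
          · exact Or.inr (Or.inl hZ')
      · exact absurd (hGV a b hG).1 hV
    · rcases hnew a b hadj hG with ⟨haX, hb⟩ | ⟨hbX, _⟩
      · exact Or.inr (Or.inr hb)
      · exact Or.inl hbX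
  -- clean segments: paths avoiding Zhat with endpoints in X have nonnegative weight
  have hclean : ∀ (a u : V) (Q : Ghat.Walk a u), Q.IsPath → a ∈ X → u ∈ X →
      (∀ t ∈ Q.support, t ∉ Z ∪ Vgᶜ) → 0 ≤ walkWeight F Q := by
    intro a u Q hQ haX huX hsup
    have hE : ∀ e ∈ Q.edges, e ∈ G.edgeSet := by
      intro e he
      induction e using Sym2.inductionOn with
      | hf v w =>
        have hvs := Q.fst_mem_support_of_mem_edges he
        have hws := Q.snd_mem_support_of_mem_edges he
        have hvV : v ∈ Vg := by
          by_contra h; exact hsup v hvs (Or.inr h)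
        have hwV : w ∈ Vg := by
          by_contra h; exact hsup w hws (Or.inr h)
        exact hGedge v w (Q.adj_of_mem_edges he) hvV hwV
    have hw : walkWeight F (Q.transfer G hE) = walkWeight F Q := by
      simp only [walkWeight, Walk.edges_transfer]
    have hd : distF G F a u ≤ walkWeight F (Q.transfer G hE) :=
      distF_le_walkWeight (hQ.transfer hE)
    have h0 : 0 ≤ distF G F a u := hext a haX u huX
    omega
  -- the key inductive lemma
  have key : ∀ n : ℕ, ∀ (a u : V) (Q : Ghat.Walk a u), Q.length ≤ n → Q.IsPath →
      a ∈ X ∪ (Z ∪ Vgᶜ) → u ∈ X ∪ (Z ∪ Vgᶜ) →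
      0 ≤ walkWeight F Q ∧
        ((∃ t ∈ Q.support, t ∈ Z ∪ Vgᶜ) → Q.length ≠ 0 → 0 < walkWeight F Q) := by
    intro n
    induction n with
    | zero =>
      intro a u Q hlen hQ ha hu
      have h0 : Q.length = 0 := Nat.le_zero.mp hlen
      have hE : Q.edges = [] :=
        List.length_eq_zero_iff.mp (by rw [Q.length_edges]; exact h0)
      exact ⟨le_of_eq (walkWeight_edges_nil hE).symm, fun _ h => absurd h0 h⟩
    | succ n IH =>
      intro a u Q hlen hQ ha hu
      by_cases h0 : Q.length = 0
      · have hE : Q.edges = [] :=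
          List.length_eq_zero_iff.mp (by rw [Q.length_edges]; exact h0)
        exact ⟨le_of_eq (walkWeight_edges_nil hE).symm, fun _ h => absurd h0 h⟩
      rcases ha with haX | haZ
      · rcases hu with huX | huZ
        · -- both endpoints in X
          by_cases hmeet : ∃ t ∈ Q.support, t ∈ Z ∪ Vgᶜ
          · obtain ⟨t, htsup, htZ⟩ := hmeet
            have hta : t ≠ a := fun h => hXZh a haX (h ▸ htZ)
            have htu : t ≠ u := fun h => hXZh u huX (h ▸ htZ)
            have hspec : (Q.takeUntil t htsup).append (Q.dropUntil t htsup) = Q :=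
              Q.take_spec htsup
            have hQ1 : (Q.takeUntil t htsup).IsPath := hQ.takeUntil htsup
            have hQ2 : (Q.dropUntil t htsup).IsPath := hQ.dropUntil htsup
            have hlensum : (Q.takeUntil t htsup).length + (Q.dropUntil t htsup).length
                = Q.length := by
              have := congrArg Walk.length hspec
              rwa [Walk.length_append] at this
            have hl1 : (Q.takeUntil t htsup).length ≠ 0 := fun h =>
              hta (Walk.eq_of_length_eq_zero h).symm
            have hl2 : (Q.dropUntil t htsup).length ≠ 0 := fun h =>
              htu (Walk.eq_of_length_eq_zero h)
            have hlen1 : (Q.takeUntil t htsup).length ≤ n := by omega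
            have hlen2 : (Q.dropUntil t htsup).length ≤ n := by omega
            have hP1 := (IH a t (Q.takeUntil t htsup) hlen1 hQ1 (Or.inl haX)
              (Or.inr htZ)).2 ⟨t, Walk.end_mem_support _, htZ⟩ hl1
            have hP2 := (IH t u (Q.dropUntil t htsup) hlen2 hQ2 (Or.inr htZ)
              (Or.inl huX)).1
            have heq : walkWeight F Q
                = walkWeight F (Q.takeUntil t htsup)
                  + walkWeight F (Q.dropUntil t htsup) := by
              have := congrArg (walkWeight F) hspec
              rw [walkWeight_append] at this
              omega
            constructor
            · omega
            · intro _ _; omega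
          · have h1 := hclean a u Q hQ haX huX (by push_neg at hmeet; exact hmeet)
            exact ⟨h1, fun h _ => absurd h hmeet⟩
        · -- u ∈ Zhat: decompose the reverse
          have hnn : ¬ Q.reverse.Nil := by
            rw [Walk.nil_iff_length_eq, Walk.length_reverse]
            exact h0
          obtain ⟨b, hadj, R, hR⟩ := Walk.not_nil_iff.mp hnn
          have hRp : R.IsPath := by
            have := hQ.reverse
            rw [hR] at this
            exact this.of_cons
          have hbF : s(u,b) ∉ F := hedgeF u b huZ
          have hb : b ∈ X ∪ (Z ∪ Vgᶜ) := hnbr u b hadj huZ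
          have hlenR : R.length ≤ n := by
            have : Q.reverse.length = Q.length := Walk.length_reverse Q
            rw [hR, Walk.length_cons] at this
            omega
          have h1 := (IH b a R hlenR hRp hb (Or.inl haX)).1
          have heq : walkWeight F Q = 1 + walkWeight F R := by
            rw [← walkWeight_reverse Q, hR, walkWeight_cons, if_neg hbF]
          constructor
          · omega
          · intro _ _; omega
      · -- a ∈ Zhat: front decomposition
        have hnn : ¬ Q.Nil := by rw [Walk.nil_iff_length_eq]; exact h0
        obtain ⟨b, hadj, Q', rfl⟩ := Walk.not_nil_iff.mp hnn
        have hbF : s(a,b) ∉ F := hedgeF a b haZ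
        have hb : b ∈ X ∪ (Z ∪ Vgᶜ) := hnbr a b hadj haZ
        have hQ' : Q'.IsPath := hQ.of_cons
        have hlen' : Q'.length ≤ n := by
          rw [Walk.length_cons] at hlen; omega
        have h1 := (IH b u Q' hlen' hQ' hb hu).1
        have heq : walkWeight F (Walk.cons hadj Q') = 1 + walkWeight F Q' := by
          rw [walkWeight_cons, if_neg hbF]
        constructor
        · omega
        · intro _ _; omega
  constructor
  · -- cycles
    intro v Q hQ ⟨t, htsup, htZ⟩
    have hC : (Q.rotate t htsup).IsCycle := hQ.rotate htsup
    have hw : walkWeight F (Q.rotate t htsup) = walkWeight F Q :=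
      walkWeight_rotate Q htsup
    have hnn : ¬ (Q.rotate t htsup).Nil := hC.not_nil
    obtain ⟨b, hadj, q, hq⟩ := Walk.not_nil_iff.mp hnn
    have hqp : q.IsPath := by
      rw [hq] at hC
      exact ((Walk.cons_isCycle_iff q hadj).mp hC).1
    have hbF : s(t,b) ∉ F := hedgeF t b htZ
    have hb : b ∈ X ∪ (Z ∪ Vgᶜ) := hnbr t b hadj htZ
    have h1 := (key q.length b t q le_rfl hqp hb (Or.inr htZ)).1
    have heq : walkWeight F (Q.rotate t htsup) = 1 + walkWeight F q := by
      rw [hq, walkWeight_cons, if_neg hbF]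
    omega
  · -- paths
    intro x u Q hQ hx hu ⟨t, htsup, htZ⟩
    by_cases h0 : Q.length = 0
    · exfalso
      obtain rfl : x = u := Walk.eq_of_length_eq_zero h0
      have : Q.Nil := Walk.nil_iff_length_eq.mpr h0
      have hQnil : Q = Walk.nil := this.eq_nil
      rw [hQnil, Walk.support_nil] at htsup
      simp at htsup
      exact hXZh x hx (htsup ▸ htZ)
    · exact (key Q.length x u Q le_rfl hQ (Or.inl hx) hu).2 ⟨t, htsup, htZ⟩ h0
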